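/- Let s ≥ 1 be a natural number and let g : ℕ → ℕ be monotonically increasing such that its Grundy function satisfies G_g(y,z) = (y ⊕ (z+s)) − s for all y, z ∈ ℕ with y ≤ g(z). Define g_{−s} : ℕ → ℕ by g_{−s}(z) = g(z−s) for z ≥ s and g_{−s}(z) = g(0) for 0 ≤ z < s. Then the Grundy function of the chocolate bar game satisfies G_{g_{−s}}(y,z) = y ⊕ z for all y, z ∈ ℕ with y ≤ g_{−s}(z). -/

import Mathlib

/-- The minimum excluded value of a set of natural numbers. -/
noncomputable def mex (S : Set ℕ) : ℕ := sInf {n | n ∉ S}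

/-- The Grundy function of the chocolate bar game `CB(f,·,·)`:
`G_f(y,z) = mex({G_f(v,z) : v < y} ∪ {G_f(min(y, f w), w) : w < z})`. -/
noncomputable def grundy (f : ℕ → ℕ) (y z : ℕ) : ℕ :=
  mex ({x | ∃ v, ∃ _ : v < y, x = grundy f v z} ∪
       {x | ∃ w, ∃ _ : w < z, x = grundy f (min y (f w)) w})
termination_by (z, y)

lemma mex_eq_of {S : Set ℕ} {a : ℕ} (ha : a ∉ S) (hb : ∀ n < a, n ∈ S) : mex S = a := by
  unfold mex
  apply le_antisymm
  · exact Nat.sInf_le ha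
  · apply le_csInf ⟨a, ha⟩
    intro b hb'
    by_contra h
    push_neg at h
    exact hb' (hb b h)

lemma mem_of_lt_mex {S : Set ℕ} {n : ℕ} (h : n < mex S) : n ∈ S := by
  by_contra hn
  unfold mex at h
  exact absurd (Nat.sInf_le hn) (not_le.2 h)

lemma mex_not_mem {S : Set ℕ} (hS : S.Finite) : mex S ∉ S := by
  have hne : {n | n ∉ S}.Nonempty := by
    rcases (Set.Finite.infinite_compl hS).nonempty with ⟨x, hx⟩
    exact ⟨x, hx⟩
  exact Nat.sInf_mem hne

lemma grundy_options_finite (f : ℕ → ℕ) (y z : ℕ) :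
    (({x | ∃ v, ∃ _ : v < y, x = grundy f v z} ∪
      {x | ∃ w, ∃ _ : w < z, x = grundy f (min y (f w)) w}) : Set ℕ).Finite := by
  apply Set.Finite.union
  · apply Set.Finite.subset ((Set.finite_Iio y).image (fun v => grundy f v z))
    rintro x ⟨v, hv, rfl⟩
    exact ⟨v, hv, rfl⟩
  · apply Set.Finite.subset ((Set.finite_Iio z).image (fun w => grundy f (min y (f w)) w))
    rintro x ⟨w, hw, rfl⟩
    exact ⟨w, hw, rfl⟩

lemma grundy_not_mem (f : ℕ → ℕ) (y z : ℕ) :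
    grundy f y z ∉ ({x | ∃ v, ∃ _ : v < y, x = grundy f v z} ∪
      {x | ∃ w, ∃ _ : w < z, x = grundy f (min y (f w)) w} : Set ℕ) := by
  intro hmem
  have h0 : grundy f y z = mex ({x | ∃ v, ∃ _ : v < y, x = grundy f v z} ∪
      {x | ∃ w, ∃ _ : w < z, x = grundy f (min y (f w)) w} : Set ℕ) := by
    rw [grundy]
  rw [h0] at hmem
  exact mex_not_mem (grundy_options_finite f y z) hmem

lemma grundy_ne_left (f : ℕ → ℕ) {v y z : ℕ} (h : v < y) :
    grundy f v z ≠ grundy f y z :=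
  fun heq => grundy_not_mem f y z (Or.inl ⟨v, h, heq.symm⟩)

lemma grundy_ne_right (f : ℕ → ℕ) {w y z : ℕ} (h : w < z) :
    grundy f (min y (f w)) w ≠ grundy f y z :=
  fun heq => grundy_not_mem f y z (Or.inr ⟨w, h, heq.symm⟩)

lemma grundy_zero (f : ℕ → ℕ) (y : ℕ) : grundy f y 0 = y := by
  induction y using Nat.strong_induction_on with
  | _ y ih =>
    rw [grundy]
    apply mex_eq_of
    · rintro (⟨v, hv, hval⟩ | ⟨w, hw, _⟩)
      · rw [ih v hv] at hval; omega
      · omega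
    · intro n hn
      exact Or.inl ⟨n, hn, (ih n hn).symm⟩

/-- XOR fact: if `m ^^^ r < s` and `m ^^^ s < r` then also `r ^^^ s < m`. -/
lemma xor_lt_third {m r s : ℕ} (h1 : m ^^^ r < s) (h2 : m ^^^ s < r) : r ^^^ s < m := by
  have hs' : s = (m ^^^ s) ^^^ m := by
    rw [Nat.xor_comm m s, Nat.xor_xor_cancel_right]
  rw [hs'] at h1
  rcases Nat.lt_xor_cases h1 with h | h
  · rw [Nat.xor_comm m r, Nat.xor_xor_cancel_right] at h
    exact absurd h (lt_asymm h2)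
  · have he : (m ^^^ r) ^^^ (m ^^^ s) = r ^^^ s := by
      rw [Nat.xor_comm m r, Nat.xor_assoc, Nat.xor_xor_cancel_left]
    rwa [he] at h

theorem stmt_18 (s : ℕ) (hs : 1 ≤ s) (g : ℕ → ℕ) (hmono : Monotone g)
    (hG : ∀ y z : ℕ, y ≤ g z → grundy g y z = (y ^^^ (z + s)) - s)
    (gms : ℕ → ℕ) (hgms : ∀ z, gms z = if s ≤ z then g (z - s) else g 0)
    (y z : ℕ) (hyz : y ≤ gms z) :
    grundy gms y z = y ^^^ z := by
  have hgz : ∀ t : ℕ, g 0 ≤ g t := fun t => hmono (Nat.zero_le t)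
  -- (A): everything below g 0 is bitwise disjoint from s
  have hA : ∀ p, p ≤ g 0 → p ^^^ s = p + s := by
    intro p hp
    have h0 := hG p 0 hp
    rw [grundy_zero, Nat.zero_add] at h0
    rcases Nat.eq_zero_or_pos p with rfl | hppos
    · simp
    · omega
  -- (F'): p ≤ g 0 and d < s imply p ^^^ d < s
  have hF' : ∀ p, p ≤ g 0 → ∀ d, d < s → p ^^^ d < s := by
    intro p hp d hd
    by_contra hcon
    push_neg at hcon
    have ht1s : (p ^^^ d) - s + s = p ^^^ d := by omega
    have h1 : grundy g p ((p ^^^ d) - s) = 0 := by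
      rw [hG p _ (le_trans hp (hgz _)), ht1s, Nat.xor_xor_cancel_left]
      omega
    have h2 : grundy g p p = 0 := by
      rw [hG p p (le_trans hp (hgz p))]
      have he : p ^^^ (p + s) = s := by rw [← hA p hp, Nat.xor_xor_cancel_left]
      rw [he, Nat.sub_self]
    have hne : (p ^^^ d) - s ≠ p := by
      intro heq
      have h' : p ^^^ d = p ^^^ s := by rw [hA p hp]; omega
      have := Nat.xor_right_injective h'
      omega
    rcases lt_or_gt_of_ne hne with hlt | hgt
    · have hne2 := grundy_ne_right g (y := p) (z := p) hlt
      rw [min_eq_left (le_trans hp (hgz _))] at hne2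
      exact hne2 (h1.trans h2.symm)
    · have hne2 := grundy_ne_right g (y := p) (z := (p ^^^ d) - s) hgt
      rw [min_eq_left (le_trans hp (hgz p))] at hne2
      exact hne2 (h2.trans h1.symm)
  -- (L): for valid positions of the g-game, y ^^^ (z+s) ≥ s
  have hL : ∀ t m, m ≤ g t → s ≤ m ^^^ (t + s) := by
    intro t m hm
    by_contra hcon
    push_neg at hcon
    have hm0 : grundy g m t = 0 := by
      rw [hG m t hm]; omega
    have hne1 : m ^^^ (t + s) ≠ s := Nat.ne_of_lt hcon
    have hB : m < s ^^^ (t + s) := by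
      rcases lt_trichotomy (s ^^^ (t + s)) m with hlt | heq | hgt
      · exfalso
        have hv : grundy g (s ^^^ (t + s)) t = 0 := by
          rw [hG _ t (le_trans hlt.le hm), Nat.xor_xor_cancel_right, Nat.sub_self]
        exact grundy_ne_left g hlt (hv.trans hm0.symm)
      · exact absurd (by rw [← heq, Nat.xor_xor_cancel_right]) hne1
      · exact hgt
    have hAlt : m ^^^ s < t + s := by
      rcases lt_trichotomy (m ^^^ s) (t + s) with hlt | heq | hgt
      · exact hlt
      · exact absurd (by rw [← heq, Nat.xor_xor_cancel_left]) hne1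
      · exfalso
        have ht's : (m ^^^ s) - s + s = m ^^^ s := by omega
        have htt' : t < (m ^^^ s) - s := by omega
        have hv : grundy g m ((m ^^^ s) - s) = 0 := by
          rw [hG m _ (le_trans hm (hmono htt'.le)), ht's, Nat.xor_xor_cancel_left, Nat.sub_self]
        have hne2 := grundy_ne_right g (y := m) (z := (m ^^^ s) - s) htt'
        rw [min_eq_left hm] at hne2
        exact hne2 (hm0.trans hv.symm)
    have hX := xor_lt_third hcon hAlt
    rw [Nat.xor_comm] at hX
    exact absurd hB (lt_asymm hX)
  -- main induction
  suffices H : ∀ z y, y ≤ gms z → grundy gms y z = y ^^^ z from H z y hyz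
  clear hyz y z
  intro z
  induction z using Nat.strong_induction_on with
  | _ z ihz =>
    intro y
    induction y using Nat.strong_induction_on with
    | _ y ihy =>
      intro hyz
      rw [grundy]
      apply mex_eq_of
      · -- y ^^^ z is not an option value
        rintro (⟨v, hv, hval⟩ | ⟨w, hw, hval⟩)
        · rw [ihy v hv (le_trans hv.le hyz)] at hval
          have := Nat.xor_left_injective (x := z) hval
          omega
        · rcases le_or_gt y (gms w) with hyw | hyw
          · rw [min_eq_left hyw, ihz w hw y hyw] at hval
            have := Nat.xor_right_injective (x := y) hval
            omega
          · rw [min_eq_right hyw.le, ihz w hw (gms w) le_rfl] at hval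
            rcases lt_or_ge z s with hzs | hzs
            · rw [hgms w, if_neg (by omega)] at hyw
              rw [hgms z, if_neg (by omega)] at hyz
              omega
            · have hz' : y ≤ g (z - s) := by rw [hgms z, if_pos hzs] at hyz; exact hyz
              rcases lt_or_ge w s with hws | hws
              · rw [hgms w, if_neg (by omega)] at hval hyw
                have h1 := hF' (g 0) le_rfl w hws
                have h2 := hL (z - s) y hz'
                rw [Nat.sub_add_cancel hzs] at h2
                omega
              · rw [hgms w, if_pos hws] at hval hyw
                have hltw : w - s < z - s := by omega
                have hne2 := grundy_ne_right g (y := y) (z := z - s) hltw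
                rw [min_eq_right hyw.le, hG (g (w - s)) (w - s) le_rfl, hG y (z - s) hz',
                  Nat.sub_add_cancel hws, Nat.sub_add_cancel hzs, hval] at hne2
                exact hne2 rfl
      · -- every u < y ^^^ z is an option value
        intro u hu
        rcases Nat.lt_xor_cases hu with hv | hw
        · refine Or.inl ⟨u ^^^ z, hv, ?_⟩
          rw [ihy _ hv (le_trans hv.le hyz), Nat.xor_xor_cancel_right]
        · rcases le_or_gt y (gms (u ^^^ y)) with hyw | hyw
          · refine Or.inr ⟨u ^^^ y, hw, ?_⟩
            rw [min_eq_left hyw, ihz _ hw y hyw, Nat.xor_comm u y, Nat.xor_xor_cancel_left]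
          · rcases lt_or_ge z s with hzs | hzs
            · exfalso
              rw [hgms _, if_neg (by omega)] at hyw
              rw [hgms z, if_neg (by omega)] at hyz
              omega
            · have hz' : y ≤ g (z - s) := by rw [hgms z, if_pos hzs] at hyz; exact hyz
              rcases lt_or_ge u s with hus | hus
              · -- small u : use a column w3 < s
                have hp0 : min y (g 0) ≤ g 0 := min_le_right _ _
                have hw3 : (min y (g 0)) ^^^ u < s := hF' _ hp0 u hus
                have hg3 : gms ((min y (g 0)) ^^^ u) = g 0 := by
                  rw [hgms, if_neg (by omega)]
                refine Or.inr ⟨(min y (g 0)) ^^^ u, by omega, ?_⟩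
                rw [hg3, ihz _ (by omega) _ (by rw [hg3]; exact hp0), Nat.xor_xor_cancel_left]
              · -- big u : use the mex property of the g-game at (y, z-s)
                have key : u - s < grundy g y (z - s) := by
                  rw [hG y (z - s) hz', Nat.sub_add_cancel hzs]
                  omega
                rw [grundy] at key
                rcases mem_of_lt_mex key with ⟨v, hvlt, hvval⟩ | ⟨w', hw'lt, hw'val⟩
                · rw [hG v (z - s) (le_trans hvlt.le hz'), Nat.sub_add_cancel hzs] at hvval
                  have hLv : s ≤ v ^^^ z := by
                    have := hL (z - s) v (le_trans hvlt.le hz')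
                    rwa [Nat.sub_add_cancel hzs] at this
                  have huv : u = v ^^^ z := by omega
                  refine Or.inl ⟨v, hvlt, ?_⟩
                  rw [ihy v hvlt (le_trans hvlt.le hyz), ← huv]
                · have hple : min y (g w') ≤ g w' := min_le_right _ _
                  rw [hG _ w' hple] at hw'val
                  have hLp : s ≤ (min y (g w')) ^^^ (w' + s) := hL w' _ hple
                  have hup : u = (min y (g w')) ^^^ (w' + s) := by omega
                  have hw2lt : w' + s < z := by omega
                  have hg2 : gms (w' + s) = g w' := by
                    rw [hgms, if_pos (by omega), Nat.add_sub_cancel]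
                  refine Or.inr ⟨w' + s, hw2lt, ?_⟩
                  rw [hg2, ihz _ hw2lt _ (by rw [hg2]; exact hple), ← hup]
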